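/- Let f:[a,b]×[c,d]→ℝ be absolutely continuous with |∂²f/∂t∂s| ≤ M on (a,b)×(c,d). Then |((b-a)(d-c)/4)·[f(a,c)+f(a,d)+f(b,c)+f(b,d)] - ((d-c)/2)∫_a^b [f(t,c)+f(t,d)] dt - ((b-a)/2)∫_c^d [f(a,s)+f(b,s)] ds + ∫_a^b∫_c^d f(t,s) ds dt| ≤ (1/16)·M·(b-a)²(d-c)². -/

import Mathlib

open Set intervalIntegral MeasureTheory Filter Topology

section prelim
variable (a b c d M : ℝ) (f f₁ f₂ : ℝ → ℝ → ℝ)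

lemma st_slope_bound (hab : a < b) (hcd : c < d)
    (hd2 : ∀ t ∈ Set.Ioo a b, ∀ s ∈ Set.Ioo c d, HasDerivAt (fun v => f₁ t v) (f₂ t s) s)
    (hM : ∀ t ∈ Set.Ioo a b, ∀ s ∈ Set.Ioo c d, |f₂ t s| ≤ M) :
    ∀ ξ ∈ Set.Ioo a b, ∀ s ∈ Set.Ioo c d, ∀ σ ∈ Set.Ioo c d,
      |f₁ ξ σ - f₁ ξ s| ≤ M * |σ - s| := by
  have key : ∀ ξ ∈ Set.Ioo a b, ∀ s ∈ Set.Ioo c d, ∀ σ ∈ Set.Ioo c d, s < σ →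
      |f₁ ξ σ - f₁ ξ s| ≤ M * |σ - s| := by
    intro ξ hξ s hs σ hσ hsσ
    have hsub : Set.Icc s σ ⊆ Set.Ioo c d := fun v hv => ⟨lt_of_lt_of_le hs.1 hv.1, lt_of_le_of_lt hv.2 hσ.2⟩
    obtain ⟨η, hη, hslope⟩ := exists_hasDerivAt_eq_slope (fun v => f₁ ξ v) (f₂ ξ) hsσ
      (fun v hv => ((hd2 ξ hξ v (hsub hv)).continuousAt).continuousWithinAt)
      (fun x hx => hd2 ξ hξ x (hsub (Set.Ioo_subset_Icc_self hx)))
    have hηcd : η ∈ Set.Ioo c d := hsub (Set.Ioo_subset_Icc_self hη)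
    have hne : σ - s ≠ 0 := sub_ne_zero.2 (ne_of_gt hsσ)
    rw [eq_div_iff hne] at hslope
    have : f₁ ξ σ - f₁ ξ s = f₂ ξ η * (σ - s) := hslope.symm
    rw [this, abs_mul]
    exact mul_le_mul_of_nonneg_right (hM ξ hξ η hηcd) (abs_nonneg _)
  intro ξ hξ s hs σ hσ
  rcases lt_trichotomy s σ with h | h | h
  · exact key ξ hξ s hs σ hσ h
  · simp [h]
  · rw [show f₁ ξ σ - f₁ ξ s = -(f₁ ξ s - f₁ ξ σ) by ring, abs_neg, abs_sub_comm σ s]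
    exact key ξ hξ σ hσ s hs h

lemma rect_interior (hab : a < b) (hcd : c < d)
    (hd1 : ∀ t ∈ Set.Icc a b, ∀ s ∈ Set.Icc c d, HasDerivAt (fun u => f u s) (f₁ t s) t)
    (hd2 : ∀ t ∈ Set.Ioo a b, ∀ s ∈ Set.Ioo c d, HasDerivAt (fun v => f₁ t v) (f₂ t s) s)
    (hM : ∀ t ∈ Set.Ioo a b, ∀ s ∈ Set.Ioo c d, |f₂ t s| ≤ M) :
    ∀ t ∈ Set.Icc a b, ∀ u ∈ Set.Icc a b, ∀ s ∈ Set.Ioo c d, ∀ σ ∈ Set.Ioo c d,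
      |f u σ - f t σ - f u s + f t s| ≤ M * |u - t| * |σ - s| := by
  have key : ∀ t ∈ Set.Icc a b, ∀ u ∈ Set.Icc a b, t < u →
      ∀ s ∈ Set.Ioo c d, ∀ σ ∈ Set.Ioo c d,
      |f u σ - f t σ - f u s + f t s| ≤ M * |u - t| * |σ - s| := by
    intro t ht u hu htu s hs σ hσ
    have hsub : Set.Icc t u ⊆ Set.Icc a b := Set.Icc_subset_Icc ht.1 hu.2
    obtain ⟨ξ, hξ, hslope⟩ := exists_hasDerivAt_eq_slope (fun v => f v σ - f v s)
      (fun v => f₁ v σ - f₁ v s) htu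
      (fun v hv => (((hd1 v (hsub hv) σ (Set.Ioo_subset_Icc_self hσ)).sub
        (hd1 v (hsub hv) s (Set.Ioo_subset_Icc_self hs))).continuousAt).continuousWithinAt)
      (fun x hx => (hd1 x (hsub (Set.Ioo_subset_Icc_self hx)) σ (Set.Ioo_subset_Icc_self hσ)).sub
        (hd1 x (hsub (Set.Ioo_subset_Icc_self hx)) s (Set.Ioo_subset_Icc_self hs)))
    have hξab : ξ ∈ Set.Ioo a b := ⟨lt_of_le_of_lt ht.1 hξ.1, lt_of_lt_of_le hξ.2 hu.2⟩
    have hne : u - t ≠ 0 := sub_ne_zero.2 (ne_of_gt htu)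
    rw [eq_div_iff hne] at hslope
    have heq : f u σ - f t σ - f u s + f t s = (f₁ ξ σ - f₁ ξ s) * (u - t) := by
      linarith [hslope]
    rw [heq, abs_mul]
    calc |f₁ ξ σ - f₁ ξ s| * |u - t| ≤ (M * |σ - s|) * |u - t| :=
          mul_le_mul_of_nonneg_right
            (st_slope_bound a b c d M f₁ f₂ hab hcd hd2 hM ξ hξab s hs σ hσ) (abs_nonneg _)
      _ = M * |u - t| * |σ - s| := by ring
  intro t ht u hu s hs σ hσ
  rcases lt_trichotomy t u with h | h | h
  · exact key t ht u hu h s hs σ hσ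
  · simp [h]
  · rw [show f u σ - f t σ - f u s + f t s = -(f t σ - f u σ - f t s + f u s) by ring, abs_neg,
      abs_sub_comm u t]
    exact key u hu t ht h s hs σ hσ

end prelim

section prelim2
variable (a b c d M : ℝ) (f f₁ f₂ : ℝ → ℝ → ℝ)

lemma seq_tendsto (x m : ℝ) :
    Tendsto (fun n : ℕ => x + (m - x) * (1/(n+2))) atTop (𝓝 x) := by
  have h2 : Tendsto (fun n : ℕ => ((n:ℝ)+2)) atTop atTop :=
    tendsto_atTop_add_const_right _ 2 tendsto_natCast_atTop_atTop
  have h0 : Tendsto (fun n : ℕ => 1/((n:ℝ)+2)) atTop (𝓝 0) := by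
    simpa [one_div, Pi.inv_def] using h2.inv_tendsto_atTop
  have h3 : Tendsto (fun n : ℕ => x + (m - x) * (1/(n+2))) atTop (𝓝 (x + (m - x) * 0)) :=
    (tendsto_const_nhds : Tendsto (fun _ : ℕ => x) atTop (𝓝 x)).add
      ((tendsto_const_nhds : Tendsto (fun _ : ℕ => m - x) atTop (𝓝 (m - x))).mul h0)
  simpa using h3

lemma seq_mem (x c d : ℝ) (hcd : c < d) (hx : x ∈ Set.Icc c d) (n : ℕ) :
    x + ((c+d)/2 - x) * (1/(n+2)) ∈ Set.Ioo c d := by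
  have hδ0 : 0 < (1:ℝ)/(n+2) := by positivity
  have hδ1 : (1:ℝ)/(n+2) ≤ 1 := by
    rw [div_le_one (by positivity)]
    have : (0:ℝ) ≤ n := Nat.cast_nonneg n
    linarith
  obtain ⟨hx1, hx2⟩ := hx
  constructor <;> nlinarith [mul_nonneg (sub_nonneg.2 hx1) (sub_nonneg.2 hδ1),
    mul_nonneg (sub_nonneg.2 hx2) (sub_nonneg.2 hδ1)]

lemma cont_slice (hc : ContinuousOn (fun p : ℝ × ℝ => f p.1 p.2) (Set.Icc a b ×ˢ Set.Icc c d))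
    (u : ℝ) (hu : u ∈ Set.Icc a b) : ContinuousOn (fun v => f u v) (Set.Icc c d) :=
  hc.comp ((continuous_const.prodMk continuous_id).continuousOn) (fun v hv => ⟨hu, hv⟩)

lemma cont_slice' (hc : ContinuousOn (fun p : ℝ × ℝ => f p.1 p.2) (Set.Icc a b ×ˢ Set.Icc c d))
    (s : ℝ) (hs : s ∈ Set.Icc c d) : ContinuousOn (fun u => f u s) (Set.Icc a b) :=
  hc.comp ((continuous_id.prodMk continuous_const).continuousOn) (fun v hv => ⟨hv, hs⟩)

lemma rect_full (hab : a < b) (hcd : c < d)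
    (hc : ContinuousOn (fun p : ℝ × ℝ => f p.1 p.2) (Set.Icc a b ×ˢ Set.Icc c d))
    (hd1 : ∀ t ∈ Set.Icc a b, ∀ s ∈ Set.Icc c d, HasDerivAt (fun u => f u s) (f₁ t s) t)
    (hd2 : ∀ t ∈ Set.Ioo a b, ∀ s ∈ Set.Ioo c d, HasDerivAt (fun v => f₁ t v) (f₂ t s) s)
    (hM : ∀ t ∈ Set.Ioo a b, ∀ s ∈ Set.Ioo c d, |f₂ t s| ≤ M) :
    ∀ t ∈ Set.Icc a b, ∀ u ∈ Set.Icc a b, ∀ s ∈ Set.Icc c d, ∀ σ ∈ Set.Icc c d,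
      |f u σ - f t σ - f u s + f t s| ≤ M * |u - t| * |σ - s| := by
  intro t ht u hu s hs σ hσ
  set ss : ℕ → ℝ := fun n => s + ((c+d)/2 - s) * (1/(n+2)) with hss
  set σσ : ℕ → ℝ := fun n => σ + ((c+d)/2 - σ) * (1/(n+2)) with hσσ
  have hsm : ∀ n, ss n ∈ Set.Ioo c d := seq_mem s c d hcd hs
  have hσm : ∀ n, σσ n ∈ Set.Ioo c d := seq_mem σ c d hcd hσ
  have hst : Tendsto ss atTop (𝓝 s) := seq_tendsto s _
  have hσt : Tendsto σσ atTop (𝓝 σ) := seq_tendsto σ _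
  have hstw : Tendsto ss atTop (𝓝[Set.Icc c d] s) :=
    tendsto_nhdsWithin_of_tendsto_nhds_of_eventually_within _ hst
      (Eventually.of_forall fun n => Set.Ioo_subset_Icc_self (hsm n))
  have hσtw : Tendsto σσ atTop (𝓝[Set.Icc c d] σ) :=
    tendsto_nhdsWithin_of_tendsto_nhds_of_eventually_within _ hσt
      (Eventually.of_forall fun n => Set.Ioo_subset_Icc_self (hσm n))
  have Tus : Tendsto (fun n => f u (ss n)) atTop (𝓝 (f u s)) :=
    ((cont_slice a b c d f hc u hu s hs).tendsto).comp hstw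
  have Tts : Tendsto (fun n => f t (ss n)) atTop (𝓝 (f t s)) :=
    ((cont_slice a b c d f hc t ht s hs).tendsto).comp hstw
  have Tuσ : Tendsto (fun n => f u (σσ n)) atTop (𝓝 (f u σ)) :=
    ((cont_slice a b c d f hc u hu σ hσ).tendsto).comp hσtw
  have Ttσ : Tendsto (fun n => f t (σσ n)) atTop (𝓝 (f t σ)) :=
    ((cont_slice a b c d f hc t ht σ hσ).tendsto).comp hσtw
  have hL : Tendsto (fun n => |f u (σσ n) - f t (σσ n) - f u (ss n) + f t (ss n)|) atTop
      (𝓝 |f u σ - f t σ - f u s + f t s|) := (((Tuσ.sub Ttσ).sub Tus).add Tts).abs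
  have hR : Tendsto (fun n => M * |u - t| * |σσ n - ss n|) atTop
      (𝓝 (M * |u - t| * |σ - s|)) := tendsto_const_nhds.mul (hσt.sub hst).abs
  exact le_of_tendsto_of_tendsto' hL hR (fun n =>
    rect_interior a b c d M f f₁ f₂ hab hcd hd1 hd2 hM t ht u hu (ss n) (hsm n) (σσ n) (hσm n))

lemma f1_lip (hab : a < b) (hcd : c < d)
    (hc : ContinuousOn (fun p : ℝ × ℝ => f p.1 p.2) (Set.Icc a b ×ˢ Set.Icc c d))
    (hd1 : ∀ t ∈ Set.Icc a b, ∀ s ∈ Set.Icc c d, HasDerivAt (fun u => f u s) (f₁ t s) t)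
    (hd2 : ∀ t ∈ Set.Ioo a b, ∀ s ∈ Set.Ioo c d, HasDerivAt (fun v => f₁ t v) (f₂ t s) s)
    (hM : ∀ t ∈ Set.Ioo a b, ∀ s ∈ Set.Ioo c d, |f₂ t s| ≤ M) :
    ∀ t ∈ Set.Icc a b, ∀ s ∈ Set.Icc c d, ∀ σ ∈ Set.Icc c d,
      |f₁ t σ - f₁ t s| ≤ M * |σ - s| := by
  intro t ht s hs σ hσ
  -- choose a sequence approaching t inside Icc a b, avoiding t
  obtain ⟨uu, hum, hune, hut⟩ :
      ∃ uu : ℕ → ℝ, (∀ n, uu n ∈ Set.Icc a b) ∧ (∀ n, uu n ≠ t) ∧ Tendsto uu atTop (𝓝 t) := by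
    rcases lt_or_ge t b with htb | htb
    · refine ⟨fun n => t + (b - t) * (1/(n+2)), fun n => ?_, fun n => ?_, ?_⟩
      · have hδ0 : 0 < (1:ℝ)/(n+2) := by positivity
        have hδ1 : (1:ℝ)/(n+2) ≤ 1 := by
          rw [div_le_one (by positivity)]
          have : (0:ℝ) ≤ n := Nat.cast_nonneg n
          linarith
        constructor
        · nlinarith [ht.1, sub_nonneg.2 (le_of_lt htb)]
        · nlinarith [sub_nonneg.2 (le_of_lt htb)]
      · have hδ0 : 0 < (1:ℝ)/(n+2) := by positivity
        have : 0 < (b - t) * (1/(n+2)) := mul_pos (by linarith) hδ0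
        intro h; nlinarith [this]
      · exact seq_tendsto t b
    · -- t = b, approach from the left
      have htb' : t = b := le_antisymm ht.2 htb
      refine ⟨fun n => t + (a - t) * (1/(n+2)), fun n => ?_, fun n => ?_, ?_⟩
      · have hδ0 : 0 < (1:ℝ)/(n+2) := by positivity
        have hδ1 : (1:ℝ)/(n+2) ≤ 1 := by
          rw [div_le_one (by positivity)]
          have : (0:ℝ) ≤ n := Nat.cast_nonneg n
          linarith
        have hat : a < t := htb' ▸ hab
        constructor
        · nlinarith [sub_nonneg.2 (le_of_lt hat)]
        · nlinarith [sub_nonneg.2 (le_of_lt hat)]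
      · have hδ0 : 0 < (1:ℝ)/(n+2) := by positivity
        have hat : a < t := htb' ▸ hab
        have : (a - t) * (1/(n+2)) < 0 := mul_neg_of_neg_of_pos (by linarith) hδ0
        intro h; nlinarith [this]
      · exact seq_tendsto t a
  have hutw : Tendsto uu atTop (𝓝[≠] t) :=
    tendsto_nhdsWithin_of_tendsto_nhds_of_eventually_within _ hut
      (Eventually.of_forall fun n => hune n)
  have hslσ : Tendsto (fun n => slope (fun v => f v σ) t (uu n)) atTop (𝓝 (f₁ t σ)) :=
    (hasDerivAt_iff_tendsto_slope.1 (hd1 t ht σ hσ)).comp hutw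
  have hsls : Tendsto (fun n => slope (fun v => f v s) t (uu n)) atTop (𝓝 (f₁ t s)) :=
    (hasDerivAt_iff_tendsto_slope.1 (hd1 t ht s hs)).comp hutw
  have hdiff : Tendsto (fun n => |slope (fun v => f v σ) t (uu n) -
      slope (fun v => f v s) t (uu n)|) atTop (𝓝 |f₁ t σ - f₁ t s|) := (hslσ.sub hsls).abs
  refine le_of_tendsto hdiff (Eventually.of_forall fun n => ?_)
  have hne : uu n - t ≠ 0 := sub_ne_zero.2 (hune n)
  have habs : 0 < |uu n - t| := abs_pos.2 hne
  rw [slope_def_field, slope_def_field]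
  rw [div_sub_div_same, abs_div, div_le_iff₀ habs]
  calc |f (uu n) σ - f t σ - (f (uu n) s - f t s)|
      = |f (uu n) σ - f t σ - f (uu n) s + f t s| := by ring_nf
    _ ≤ M * |uu n - t| * |σ - s| :=
        rect_full a b c d M f f₁ f₂ hab hcd hc hd1 hd2 hM t ht (uu n) (hum n) s hs σ hσ
    _ = M * |σ - s| * |uu n - t| := by ring

end prelim2

section prelim3
variable (a b c d M : ℝ) (f f₁ f₂ : ℝ → ℝ → ℝ)

/-- integral of |s - midpoint| over [c,d] -/
lemma abs_mid_integral (hcd : c ≤ d) :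
    ∫ s in c..d, |s - (c+d)/2| = (d-c)^2/4 := by
  set m : ℝ := (c+d)/2 with hm
  have hcm : c ≤ m := by rw [hm]; linarith
  have hmd : m ≤ d := by rw [hm]; linarith
  have i1 : IntervalIntegrable (fun s => |s - m|) volume c m :=
    (continuous_abs.comp (continuous_id.sub continuous_const)).intervalIntegrable c m
  have i2 : IntervalIntegrable (fun s => |s - m|) volume m d :=
    (continuous_abs.comp (continuous_id.sub continuous_const)).intervalIntegrable m d
  have hsplit : (∫ s in c..m, |s - m|) + (∫ s in m..d, |s - m|) = ∫ s in c..d, |s - m| :=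
    integral_add_adjacent_intervals i1 i2
  have h1 : (∫ s in c..m, |s - m|) = ∫ s in c..m, (m - s) := by
    apply integral_congr
    intro x hx
    rw [Set.uIcc_of_le hcm] at hx
    show |x - m| = m - x
    rw [abs_of_nonpos (by linarith [hx.2])]; ring
  have h2 : (∫ s in m..d, |s - m|) = ∫ s in m..d, (s - m) := by
    apply integral_congr
    intro x hx
    rw [Set.uIcc_of_le hmd] at hx
    show |x - m| = x - m
    exact abs_of_nonneg (by linarith [hx.1])
  have e1 : (∫ s in c..m, (m - s)) = (m - c) * m - (m^2 - c^2)/2 := by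
    rw [integral_sub (intervalIntegrable_const) (intervalIntegral.intervalIntegrable_id)]
    rw [intervalIntegral.integral_const, integral_id]
    simp only [smul_eq_mul]
  have e2 : (∫ s in m..d, (s - m)) = (d^2 - m^2)/2 - (d - m) * m := by
    rw [integral_sub (intervalIntegral.intervalIntegrable_id) (intervalIntegrable_const)]
    rw [intervalIntegral.integral_const, integral_id]
    simp only [smul_eq_mul]
  rw [← hsplit, h1, h2, e1, e2, hm]
  ring

/-- FTC in the t variable for (t - m1) * F₁ t s -/
lemma ftc_t (hab : a < b) (hcd : c < d)
    (hc : ContinuousOn (fun p : ℝ × ℝ => f p.1 p.2) (Set.Icc a b ×ˢ Set.Icc c d))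
    (hd1 : ∀ t ∈ Set.Icc a b, ∀ s ∈ Set.Icc c d, HasDerivAt (fun u => f u s) (f₁ t s) t)
    (hd2 : ∀ t ∈ Set.Ioo a b, ∀ s ∈ Set.Ioo c d, HasDerivAt (fun v => f₁ t v) (f₂ t s) s)
    (hM : ∀ t ∈ Set.Ioo a b, ∀ s ∈ Set.Ioo c d, |f₂ t s| ≤ M)
    (s : ℝ) (hs : s ∈ Set.Icc c d) :
    ∫ t in a..b, ((t - (a+b)/2) * (f₁ t s - f₁ t c)) =
      (b-a)/2 * ((f a s - f a c - f a s + f a c) + (f b s - f b c - f a s + f a c))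
        - ∫ t in a..b, (f t s - f t c - f a s + f a c) := by
  have hc' : c ∈ Set.Icc c d := ⟨le_refl c, le_of_lt hcd⟩
  set m1 : ℝ := (a+b)/2 with hm1
  set F : ℝ → ℝ := fun t => f t s - f t c - f a s + f a c with hF
  set F1 : ℝ → ℝ := fun t => f₁ t s - f₁ t c with hF1
  have hdF : ∀ t ∈ Set.Icc a b, HasDerivAt F (F1 t) t := by
    intro t ht
    exact ((hd1 t ht s hs).sub (hd1 t ht c hc')).sub_const _ |>.add_const _
  -- boundedness of F1 on Icc a b
  have hbd : ∀ t ∈ Set.Icc a b, |F1 t| ≤ M * (d - c) := by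
    intro t ht
    have := f1_lip a b c d M f f₁ f₂ hab hcd hc hd1 hd2 hM t ht c hc' s hs
    calc |F1 t| = |f₁ t s - f₁ t c| := rfl
      _ ≤ M * |s - c| := this
      _ ≤ M * (d - c) := by
          have hM0 : 0 ≤ M := by
            have := hM ((a+b)/2) ⟨by linarith, by linarith⟩ ((c+d)/2) ⟨by linarith, by linarith⟩
            exact le_trans (abs_nonneg _) this
          have : |s - c| ≤ d - c := by rw [abs_of_nonneg (by linarith [hs.1])]; linarith [hs.2]
          exact mul_le_mul_of_nonneg_left this hM0
  -- interval integrability of t ↦ (t - m1) * F1 t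
  have hcontF : ContinuousOn F (Set.Icc a b) := fun t ht => (hdF t ht).continuousAt.continuousWithinAt
  have hint1 : IntervalIntegrable (fun t => (t - m1) * F1 t) volume a b := by
    rw [intervalIntegrable_iff_integrableOn_Ioc_of_le (le_of_lt hab)]
    have heq : Set.EqOn (fun t => (t - m1) * F1 t) (fun t => (t - m1) * deriv F t) (Set.Ioc a b) := by
      intro t ht
      have : deriv F t = F1 t := (hdF t ⟨le_of_lt ht.1, ht.2⟩).deriv
      simp [this]
    apply IntegrableOn.congr_fun _ heq.symm measurableSet_Ioc
    apply Integrable.mono' (integrable_const (((|a|+|b|+|m1|)) * (M * (d - c))))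
    · exact ((measurable_id.sub measurable_const).mul (measurable_deriv F)).aestronglyMeasurable.restrict
    · rw [ae_restrict_iff' measurableSet_Ioc]
      refine Eventually.of_forall (fun t ht => ?_)
      have htm : t ∈ Set.Icc a b := ⟨le_of_lt ht.1, ht.2⟩
      have hd : deriv F t = F1 t := (hdF t htm).deriv
      rw [Real.norm_eq_abs, hd, abs_mul]
      have h1 : |t - m1| ≤ |a| + |b| + |m1| := by
        rw [abs_sub_comm]
        calc |m1 - t| ≤ |m1| + |t| := abs_sub _ _
          _ ≤ |m1| + (|a| + |b|) := by
              have : |t| ≤ max |a| |b| := abs_le_max_abs_abs htm.1 htm.2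
              have : max |a| |b| ≤ |a| + |b| := max_le (le_add_of_nonneg_right (abs_nonneg _))
                (le_add_of_nonneg_left (abs_nonneg _))
              linarith [abs_le_max_abs_abs htm.1 htm.2]
          _ = |a| + |b| + |m1| := by ring
      have h2 : |F1 t| ≤ M * (d - c) := hbd t htm
      have hnn : (0:ℝ) ≤ |F1 t| := abs_nonneg _
      nlinarith [abs_nonneg (t - m1)]
  have hint2 : IntervalIntegrable F volume a b :=
    (hcontF.mono (by rw [Set.uIcc_of_le (le_of_lt hab)])).intervalIntegrable
  -- FTC
  have hFTC : ∫ t in a..b, (F t + (t - m1) * F1 t) = (b - m1) * F b - (a - m1) * F a := by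
    have := intervalIntegral.integral_eq_sub_of_hasDerivAt (f := fun t => (t - m1) * F t)
      (f' := fun t => F t + (t - m1) * F1 t) (a := a) (b := b) ?_ (hint2.add hint1)
    · rw [this]
    · intro t ht
      rw [Set.uIcc_of_le (le_of_lt hab)] at ht
      have h := ((hasDerivAt_id t).sub_const m1).mul (hdF t ht)
      simp only [id_eq, one_mul] at h
      convert h using 1
      all_goals rfl
  rw [integral_add hint2 hint1] at hFTC
  have hFa : F a = f a s - f a c - f a s + f a c := rfl
  have hFb : F b = f b s - f b c - f a s + f a c := rfl
  rw [← hFa, ← hFb]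
  have : (b - m1) * F b - (a - m1) * F a = (b-a)/2 * (F a + F b) := by
    have e1 : b - m1 = (b-a)/2 := by rw [hm1]; ring
    have e2 : a - m1 = -((b-a)/2) := by rw [hm1]; ring
    rw [e1, e2]; ring
  rw [this] at hFTC
  have hgoal : ∫ t in a..b, ((t - m1) * F1 t) = (b-a)/2 * (F a + F b) - ∫ t in a..b, F t := by
    linarith
  exact hgoal

end prelim3

section prelim4
variable (a b c d M : ℝ) (f f₁ f₂ : ℝ → ℝ → ℝ)

lemma ae_Ioo_of_Ioc (c d : ℝ) :
    ∀ᵐ s ∂(volume.restrict (Set.Ioc c d)), s ∈ Set.Ioo c d := by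
  rw [ae_restrict_iff' measurableSet_Ioc, ae_iff]
  refine measure_mono_null (fun x hx => ?_) (measure_singleton d)
  simp only [Set.mem_setOf_eq, Classical.not_imp] at hx
  obtain ⟨h1, h2⟩ := hx
  have hxd : ¬ x < d := fun h => h2 ⟨h1.1, h⟩
  exact Set.mem_singleton_iff.2 (le_antisymm h1.2 (not_lt.1 hxd))

lemma F1_contOn (hab : a < b) (hcd : c < d)
    (hc : ContinuousOn (fun p : ℝ × ℝ => f p.1 p.2) (Set.Icc a b ×ˢ Set.Icc c d))
    (hd1 : ∀ t ∈ Set.Icc a b, ∀ s ∈ Set.Icc c d, HasDerivAt (fun u => f u s) (f₁ t s) t)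
    (hd2 : ∀ t ∈ Set.Ioo a b, ∀ s ∈ Set.Ioo c d, HasDerivAt (fun v => f₁ t v) (f₂ t s) s)
    (hM : ∀ t ∈ Set.Ioo a b, ∀ s ∈ Set.Ioo c d, |f₂ t s| ≤ M)
    (t : ℝ) (ht : t ∈ Set.Icc a b) :
    ContinuousOn (fun s => f₁ t s) (Set.Icc c d) := by
  have hlip : LipschitzOnWith (Real.toNNReal M) (fun s => f₁ t s) (Set.Icc c d) := by
    rw [lipschitzOnWith_iff_dist_le_mul]
    intro x hx y hy
    rw [Real.dist_eq, Real.dist_eq]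
    calc |f₁ t x - f₁ t y| ≤ M * |x - y| :=
          f1_lip a b c d M f f₁ f₂ hab hcd hc hd1 hd2 hM t ht y hy x hx
      _ ≤ (Real.toNNReal M : ℝ) * |x - y| := by
          apply mul_le_mul_of_nonneg_right _ (abs_nonneg _)
          rw [Real.coe_toNNReal']
          exact le_max_left _ _
  exact hlip.continuousOn

lemma ftc_s (hab : a < b) (hcd : c < d)
    (hc : ContinuousOn (fun p : ℝ × ℝ => f p.1 p.2) (Set.Icc a b ×ˢ Set.Icc c d))
    (hd1 : ∀ t ∈ Set.Icc a b, ∀ s ∈ Set.Icc c d, HasDerivAt (fun u => f u s) (f₁ t s) t)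
    (hd2 : ∀ t ∈ Set.Ioo a b, ∀ s ∈ Set.Ioo c d, HasDerivAt (fun v => f₁ t v) (f₂ t s) s)
    (hM : ∀ t ∈ Set.Ioo a b, ∀ s ∈ Set.Ioo c d, |f₂ t s| ≤ M)
    (t : ℝ) (ht : t ∈ Set.Ioo a b) :
    ∫ s in c..d, ((s - (c+d)/2) * f₂ t s) =
      (d-c)/2 * (f₁ t d - f₁ t c) - ∫ s in c..d, (f₁ t s - f₁ t c) := by
  set m2 : ℝ := (c+d)/2 with hm2
  set F1 : ℝ → ℝ := fun s => f₁ t s - f₁ t c with hF1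
  have htI : t ∈ Set.Icc a b := Set.Ioo_subset_Icc_self ht
  have hd : ∀ s ∈ Set.Ioo c d, HasDerivAt F1 (f₂ t s) s := fun s hs =>
    (hd2 t ht s hs).sub_const _
  have hcont : ContinuousOn F1 (Set.Icc c d) :=
    (F1_contOn a b c d M f f₁ f₂ hab hcd hc hd1 hd2 hM t htI).sub continuousOn_const
  have hae := ae_Ioo_of_Ioc c d
  have hMnn : 0 ≤ M := by
    have := hM ((a+b)/2) ⟨by linarith, by linarith⟩ ((c+d)/2) ⟨by linarith, by linarith⟩
    exact le_trans (abs_nonneg _) this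
  have hmi : IntegrableOn (fun s => (s - m2) * f₂ t s) (Set.Ioc c d) := by
    have h0 : IntegrableOn (fun s => (s - m2) * deriv F1 s) (Set.Ioc c d) := by
      apply Integrable.mono' (integrable_const ((|c|+|d|+|m2|) * M))
      · exact ((measurable_id.sub measurable_const).mul
          (measurable_deriv F1)).aestronglyMeasurable.restrict
      · filter_upwards [hae] with s hs
        have hQ : deriv F1 s = f₂ t s := (hd s hs).deriv
        rw [Real.norm_eq_abs, hQ, abs_mul]
        have h1 : |s - m2| ≤ |c| + |d| + |m2| := by
          have hsI : s ∈ Set.Icc c d := Set.Ioo_subset_Icc_self hs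
          have h2 : |s| ≤ max |c| |d| := abs_le_max_abs_abs hsI.1 hsI.2
          have h3 : max |c| |d| ≤ |c| + |d| := max_le (le_add_of_nonneg_right (abs_nonneg _))
            (le_add_of_nonneg_left (abs_nonneg _))
          calc |s - m2| ≤ |s| + |m2| := abs_sub _ _
            _ ≤ |c| + |d| + |m2| := by linarith
        have h2 : |f₂ t s| ≤ M := hM t ht s hs
        nlinarith [abs_nonneg (s - m2), abs_nonneg (f₂ t s)]
    apply Integrable.congr h0
    filter_upwards [hae] with s hs
    rw [(hd s hs).deriv]
  have hint2 : IntervalIntegrable (fun s => (s - m2) * f₂ t s) volume c d :=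
    (intervalIntegrable_iff_integrableOn_Ioc_of_le hcd.le).2 hmi
  have hint1 : IntervalIntegrable F1 volume c d :=
    (hcont.mono (by rw [Set.uIcc_of_le hcd.le])).intervalIntegrable
  have hFTC : ∫ s in c..d, (F1 s + (s - m2) * f₂ t s) = (d - m2) * F1 d - (c - m2) * F1 c := by
    have := intervalIntegral.integral_eq_sub_of_hasDeriv_right_of_le (f := fun s => (s - m2) * F1 s)
      (f' := fun s => F1 s + (s - m2) * f₂ t s) hcd.le
      (((continuousOn_id.sub continuousOn_const).mul hcont)) ?_ (hint1.add hint2)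
    · rw [this]
    · intro s hs
      have h := (((hasDerivAt_id s).sub_const m2).mul (hd s hs))
      simp only [id_eq, one_mul] at h
      exact h.hasDerivWithinAt
  rw [integral_add hint1 hint2] at hFTC
  have hF1c : F1 c = 0 := by simp [hF1]
  have e1 : (d - m2) * F1 d - (c - m2) * F1 c = (d-c)/2 * F1 d := by
    rw [hF1c, hm2]; ring
  rw [e1] at hFTC
  have : F1 d = f₁ t d - f₁ t c := rfl
  linarith [hFTC]

lemma inner_bound (hab : a < b) (hcd : c < d)
    (hM : ∀ t ∈ Set.Ioo a b, ∀ s ∈ Set.Ioo c d, |f₂ t s| ≤ M)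
    (t : ℝ) (ht : t ∈ Set.Ioo a b) :
    |∫ s in c..d, ((s - (c+d)/2) * f₂ t s)| ≤ M * ((d-c)^2/4) := by
  set m2 : ℝ := (c+d)/2 with hm2
  have hMnn : 0 ≤ M := by
    have := hM ((a+b)/2) ⟨by linarith, by linarith⟩ ((c+d)/2) ⟨by linarith, by linarith⟩
    exact le_trans (abs_nonneg _) this
  have hle : ‖∫ s in c..d, ((s - m2) * f₂ t s)‖ ≤ |∫ s in c..d, M * abs (s - m2)| := by
    apply intervalIntegral.norm_integral_le_abs_of_norm_le
    · rw [Set.uIoc_of_le hcd.le]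
      filter_upwards [ae_Ioo_of_Ioc c d] with s hs
      rw [Real.norm_eq_abs, abs_mul]
      exact mul_le_mul_of_nonneg_left (hM t ht s hs) (abs_nonneg _) |>.trans
        (le_of_eq (mul_comm _ _))
    · exact (continuous_const.mul (continuous_abs.comp
        (continuous_id.sub continuous_const))).intervalIntegrable c d
  rw [Real.norm_eq_abs] at hle
  have : (∫ s in c..d, M * abs (s - m2)) = M * ((d-c)^2/4) := by
    rw [intervalIntegral.integral_const_mul, hm2, abs_mid_integral c d hcd.le]
  rw [this] at hle
  calc |∫ s in c..d, ((s - m2) * f₂ t s)| ≤ |M * ((d-c)^2/4)| := hle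
    _ = M * ((d-c)^2/4) := abs_of_nonneg (by positivity)

end prelim4

section prelim5
variable (a b c d M : ℝ) (f f₁ f₂ : ℝ → ℝ → ℝ)

lemma meas_F1 (hab : a < b) (hcd : c < d)
    (hc : ContinuousOn (fun p : ℝ × ℝ => f p.1 p.2) (Set.Icc a b ×ˢ Set.Icc c d))
    (hd1 : ∀ t ∈ Set.Icc a b, ∀ s ∈ Set.Icc c d, HasDerivAt (fun u => f u s) (f₁ t s) t) :
    AEStronglyMeasurable (fun p : ℝ × ℝ => f₁ p.1 p.2 - f₁ p.1 c)
      ((volume.restrict (Set.Ioo a b)).prod (volume.restrict (Set.Ioo c d))) := by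
  have hc' : c ∈ Set.Icc c d := ⟨le_refl c, hcd.le⟩
  set g : ℝ → ℝ → ℝ := fun t s => f t s - f t c with hg
  have hgc : ContinuousOn (fun p : ℝ × ℝ => g p.1 p.2) (Set.Icc a b ×ˢ Set.Icc c d) := by
    apply hc.sub
    exact hc.comp ((continuous_fst.prodMk continuous_const).continuousOn)
      (fun p hp => ⟨hp.1, hc'⟩)
  set Q : ℕ → ℝ × ℝ → ℝ := fun n p =>
    (g (p.1 + (b - p.1)/(n+2)) p.2 - g p.1 p.2) / ((b - p.1)/(n+2)) with hQ
  have hQm : ∀ n : ℕ, AEStronglyMeasurable (Q n)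
      ((volume.restrict (Set.Ioo a b)).prod (volume.restrict (Set.Ioo c d))) := by
    intro n
    have hfrac0 : (0:ℝ) < 1/((n:ℝ)+2) := by positivity
    have hfrac1 : (1:ℝ)/((n:ℝ)+2) ≤ 1 := by
      rw [div_le_one (by positivity)]
      have : (0:ℝ) ≤ n := Nat.cast_nonneg n
      linarith
    have hQc : ContinuousOn (Q n) (Set.Ico a b ×ˢ Set.Icc c d) := by
      have hmap : Continuous (fun p : ℝ × ℝ => ((p.1 + (b - p.1)/(n+2), p.2) : ℝ × ℝ)) := by
        fun_prop
      have hmapsTo : Set.MapsTo (fun p : ℝ × ℝ => ((p.1 + (b - p.1)/(n+2), p.2) : ℝ × ℝ))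
          (Set.Ico a b ×ˢ Set.Icc c d) (Set.Icc a b ×ˢ Set.Icc c d) := by
        intro p hp
        obtain ⟨⟨h1, h2⟩, h3⟩ := hp
        refine ⟨⟨?_, ?_⟩, h3⟩
        · have : 0 ≤ (b - p.1)/((n:ℝ)+2) := div_nonneg (by linarith) (by positivity)
          linarith
        · have hb1 : (b - p.1)/((n:ℝ)+2) = (b - p.1) * (1/((n:ℝ)+2)) := by ring
          nlinarith [mul_le_mul_of_nonneg_left hfrac1 (le_of_lt (sub_pos.2 h2))]
      have hnum1 : ContinuousOn (fun p : ℝ × ℝ => g (p.1 + (b - p.1)/(n+2)) p.2)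
          (Set.Ico a b ×ˢ Set.Icc c d) :=
        hgc.comp hmap.continuousOn hmapsTo
      have hnum2 : ContinuousOn (fun p : ℝ × ℝ => g p.1 p.2) (Set.Ico a b ×ˢ Set.Icc c d) :=
        hgc.mono (Set.prod_mono Set.Ico_subset_Icc_self (subset_refl _))
      have hden : ContinuousOn (fun p : ℝ × ℝ => (b - p.1)/((n:ℝ)+2)) (Set.Ico a b ×ˢ Set.Icc c d) := by
        fun_prop
      apply (hnum1.sub hnum2).div hden
      intro p hp
      have : 0 < (b - p.1)/((n:ℝ)+2) := by
        have := hp.1.2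
        apply div_pos (by linarith) (by positivity)
      exact ne_of_gt this
    have h1 := hQc.aestronglyMeasurable (μ := volume.prod volume) (measurableSet_Ico.prod measurableSet_Icc)
    rw [Measure.prod_restrict]
    refine h1.mono_measure (Measure.restrict_mono ?_ le_rfl)
    exact Set.prod_mono Set.Ioo_subset_Ico_self Set.Ioo_subset_Icc_self
  refine aestronglyMeasurable_of_tendsto_ae atTop hQm ?_
  have hmem : ∀ᵐ p ∂((volume.restrict (Set.Ioo a b)).prod (volume.restrict (Set.Ioo c d))),
      p ∈ Set.Ioo a b ×ˢ Set.Ioo c d := by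
    rw [Measure.prod_restrict]
    exact ae_restrict_mem (measurableSet_Ioo.prod measurableSet_Ioo)
  filter_upwards [hmem] with p hp
  obtain ⟨ht, hs⟩ := hp
  set t := p.1
  set s := p.2
  have htI : t ∈ Set.Icc a b := Set.Ioo_subset_Icc_self ht
  have hsI : s ∈ Set.Icc c d := Set.Ioo_subset_Icc_self hs
  have hder : HasDerivAt (fun u => g u s) (f₁ t s - f₁ t c) t :=
    (hd1 t htI s hsI).sub (hd1 t htI c hc')
  have hslope := hasDerivAt_iff_tendsto_slope.1 hder
  have hpos : ∀ n : ℕ, 0 < (b - t)/((n:ℝ)+2) := by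
    intro n
    apply div_pos (by linarith [ht.2]) (by positivity)
  have hseq0 : Tendsto (fun n : ℕ => t + (b - t)/((n:ℝ)+2)) atTop (𝓝 t) := by
    have := seq_tendsto t b
    have heq : (fun n : ℕ => t + (b - t)/((n:ℝ)+2)) = fun n : ℕ => t + (b - t) * (1/((n:ℝ)+2)) := by
      funext n; ring
    rw [heq]
    exact this
  have hseq : Tendsto (fun n : ℕ => t + (b - t)/((n:ℝ)+2)) atTop (𝓝[≠] t) := by
    apply tendsto_nhdsWithin_of_tendsto_nhds_of_eventually_within _ hseq0
    refine Eventually.of_forall (fun n => ?_)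
    have := hpos n
    simp only [Set.mem_compl_iff, Set.mem_singleton_iff]
    intro h
    nlinarith [hpos n]
  have hcomp := hslope.comp hseq
  have heq2 : (fun n : ℕ => Q n p) =
      fun n : ℕ => slope (fun u => g u s) t (t + (b - t)/((n:ℝ)+2)) := by
    funext n
    rw [slope_def_field]
    show (g (t + (b - t)/(n+2)) s - g t s) / ((b - t)/(n+2)) = _
    congr 1
    ring
  rw [heq2]
  exact hcomp

end prelim5

section prelim6
variable (a b c d M : ℝ) (f f₁ f₂ : ℝ → ℝ → ℝ)

lemma finite_restr (hab : a < b) : IsFiniteMeasure (volume.restrict (Set.Ioo a b)) := by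
  constructor
  rw [Measure.restrict_apply_univ, Real.volume_Ioo]
  exact ENNReal.ofReal_lt_top

lemma int_prod_F1 (hab : a < b) (hcd : c < d)
    (hc : ContinuousOn (fun p : ℝ × ℝ => f p.1 p.2) (Set.Icc a b ×ˢ Set.Icc c d))
    (hd1 : ∀ t ∈ Set.Icc a b, ∀ s ∈ Set.Icc c d, HasDerivAt (fun u => f u s) (f₁ t s) t)
    (hd2 : ∀ t ∈ Set.Ioo a b, ∀ s ∈ Set.Ioo c d, HasDerivAt (fun v => f₁ t v) (f₂ t s) s)
    (hM : ∀ t ∈ Set.Ioo a b, ∀ s ∈ Set.Ioo c d, |f₂ t s| ≤ M) :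
    Integrable (fun p : ℝ × ℝ => (p.1 - (a+b)/2) * (f₁ p.1 p.2 - f₁ p.1 c))
      ((volume.restrict (Set.Ioo a b)).prod (volume.restrict (Set.Ioo c d))) := by
  haveI := finite_restr a b hab
  haveI := finite_restr c d hcd
  have hMnn : 0 ≤ M := by
    have := hM ((a+b)/2) ⟨by linarith, by linarith⟩ ((c+d)/2) ⟨by linarith, by linarith⟩
    exact le_trans (abs_nonneg _) this
  have hmem : ∀ᵐ p ∂((volume.restrict (Set.Ioo a b)).prod (volume.restrict (Set.Ioo c d))),
      p ∈ Set.Ioo a b ×ˢ Set.Ioo c d := by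
    rw [Measure.prod_restrict]
    exact ae_restrict_mem (measurableSet_Ioo.prod measurableSet_Ioo)
  apply Integrable.mono' (integrable_const ((b-a)/2 * (M * (d - c))))
  · exact ((continuous_fst.sub continuous_const).aestronglyMeasurable).mul
      (meas_F1 a b c d f f₁ hab hcd hc hd1)
  · filter_upwards [hmem] with p hp
    obtain ⟨ht, hs⟩ := hp
    have htI : p.1 ∈ Set.Icc a b := Set.Ioo_subset_Icc_self ht
    have hsI : p.2 ∈ Set.Icc c d := Set.Ioo_subset_Icc_self hs
    rw [Real.norm_eq_abs, abs_mul]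
    have h1 : |p.1 - (a+b)/2| ≤ (b-a)/2 := by
      rw [abs_le]; constructor <;> [linarith [htI.1]; linarith [htI.2]]
    have h2 : |f₁ p.1 p.2 - f₁ p.1 c| ≤ M * (d - c) := by
      calc |f₁ p.1 p.2 - f₁ p.1 c| ≤ M * |p.2 - c| :=
            f1_lip a b c d M f f₁ f₂ hab hcd hc hd1 hd2 hM p.1 htI c ⟨le_refl c, hcd.le⟩ p.2 hsI
        _ ≤ M * (d - c) := by
            apply mul_le_mul_of_nonneg_left _ hMnn
            rw [abs_of_nonneg (by linarith [hsI.1])]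
            linarith [hsI.2]
    have := mul_le_mul h1 h2 (abs_nonneg _) (by linarith)
    linarith

lemma int_prod_F (hab : a < b) (hcd : c < d)
    (hc : ContinuousOn (fun p : ℝ × ℝ => f p.1 p.2) (Set.Icc a b ×ˢ Set.Icc c d)) :
    Integrable (fun p : ℝ × ℝ => f p.1 p.2 - f p.1 c - f a p.2 + f a c)
      ((volume.restrict (Set.Ioo a b)).prod (volume.restrict (Set.Ioo c d))) := by
  have haI : a ∈ Set.Icc a b := ⟨le_refl a, hab.le⟩
  have hcI : c ∈ Set.Icc c d := ⟨le_refl c, hcd.le⟩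
  have hcF : ContinuousOn (fun p : ℝ × ℝ => f p.1 p.2 - f p.1 c - f a p.2 + f a c)
      (Set.Icc a b ×ˢ Set.Icc c d) := by
    have c1 : ContinuousOn (fun p : ℝ × ℝ => f p.1 c) (Set.Icc a b ×ˢ Set.Icc c d) :=
      hc.comp ((continuous_fst.prodMk continuous_const).continuousOn)
        (fun p hp => ⟨hp.1, hcI⟩)
    have c2 : ContinuousOn (fun p : ℝ × ℝ => f a p.2) (Set.Icc a b ×ˢ Set.Icc c d) :=
      hc.comp ((continuous_const.prodMk continuous_snd).continuousOn)
        (fun p hp => ⟨haI, hp.2⟩)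
    exact ((hc.sub c1).sub c2).add continuousOn_const
  have h1 : IntegrableOn (fun p : ℝ × ℝ => f p.1 p.2 - f p.1 c - f a p.2 + f a c)
      (Set.Icc a b ×ˢ Set.Icc c d) (volume.prod volume) :=
    hcF.integrableOn_compact (isCompact_Icc.prod isCompact_Icc)
  rw [Measure.prod_restrict]
  exact h1.mono_set (Set.prod_mono Set.Ioo_subset_Icc_self Set.Ioo_subset_Icc_self)

lemma interval_to_Ioo (hab : a < b) (g : ℝ → ℝ) :
    ∫ x in a..b, g x = ∫ x in Set.Ioo a b, g x := by
  rw [intervalIntegral.integral_of_le hab.le, integral_Ioc_eq_integral_Ioo]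

/-- standalone interval integrability of t ↦ (t-m1)*(f₁ t s - f₁ t c) -/
lemma int_tF1 (hab : a < b) (hcd : c < d)
    (hc : ContinuousOn (fun p : ℝ × ℝ => f p.1 p.2) (Set.Icc a b ×ˢ Set.Icc c d))
    (hd1 : ∀ t ∈ Set.Icc a b, ∀ s ∈ Set.Icc c d, HasDerivAt (fun u => f u s) (f₁ t s) t)
    (hd2 : ∀ t ∈ Set.Ioo a b, ∀ s ∈ Set.Ioo c d, HasDerivAt (fun v => f₁ t v) (f₂ t s) s)
    (hM : ∀ t ∈ Set.Ioo a b, ∀ s ∈ Set.Ioo c d, |f₂ t s| ≤ M)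
    (s : ℝ) (hs : s ∈ Set.Icc c d) :
    IntervalIntegrable (fun t => (t - (a+b)/2) * (f₁ t s - f₁ t c)) volume a b := by
  have hc' : c ∈ Set.Icc c d := ⟨le_refl c, hcd.le⟩
  set m1 : ℝ := (a+b)/2 with hm1
  set F : ℝ → ℝ := fun t => f t s - f t c - f a s + f a c with hF
  set F1 : ℝ → ℝ := fun t => f₁ t s - f₁ t c with hF1
  have hdF : ∀ t ∈ Set.Icc a b, HasDerivAt F (F1 t) t := by
    intro t ht
    exact ((hd1 t ht s hs).sub (hd1 t ht c hc')).sub_const _ |>.add_const _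
  have hMnn : 0 ≤ M := by
    have := hM ((a+b)/2) ⟨by linarith, by linarith⟩ ((c+d)/2) ⟨by linarith, by linarith⟩
    exact le_trans (abs_nonneg _) this
  have hbd : ∀ t ∈ Set.Icc a b, |F1 t| ≤ M * (d - c) := by
    intro t ht
    calc |F1 t| = |f₁ t s - f₁ t c| := rfl
      _ ≤ M * |s - c| := f1_lip a b c d M f f₁ f₂ hab hcd hc hd1 hd2 hM t ht c hc' s hs
      _ ≤ M * (d - c) := by
          apply mul_le_mul_of_nonneg_left _ hMnn
          rw [abs_of_nonneg (by linarith [hs.1])]; linarith [hs.2]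
  rw [intervalIntegrable_iff_integrableOn_Ioc_of_le hab.le]
  have heq : Set.EqOn (fun t => (t - m1) * F1 t) (fun t => (t - m1) * deriv F t) (Set.Ioc a b) := by
    intro t ht
    have : deriv F t = F1 t := (hdF t ⟨le_of_lt ht.1, ht.2⟩).deriv
    simp [this]
  apply IntegrableOn.congr_fun _ heq.symm measurableSet_Ioc
  apply Integrable.mono' (integrable_const (((|a|+|b|+|m1|)) * (M * (d - c))))
  · exact ((measurable_id.sub measurable_const).mul (measurable_deriv F)).aestronglyMeasurable.restrict
  · rw [ae_restrict_iff' measurableSet_Ioc]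
    refine Eventually.of_forall (fun t ht => ?_)
    have htm : t ∈ Set.Icc a b := ⟨le_of_lt ht.1, ht.2⟩
    have hd : deriv F t = F1 t := (hdF t htm).deriv
    rw [Real.norm_eq_abs, hd, abs_mul]
    have h1 : |t - m1| ≤ |a| + |b| + |m1| := by
      calc |t - m1| ≤ |t| + |m1| := abs_sub _ _
        _ ≤ |a| + |b| + |m1| := by
            have h4 : |t| ≤ max |a| |b| := abs_le_max_abs_abs htm.1 htm.2
            have h5 : max |a| |b| ≤ |a| + |b| := max_le (le_add_of_nonneg_right (abs_nonneg _))
              (le_add_of_nonneg_left (abs_nonneg _))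
            linarith
    have h2 : |F1 t| ≤ M * (d - c) := hbd t htm
    nlinarith [abs_nonneg (t - m1), abs_nonneg (F1 t)]

lemma int_prod_cont (g : ℝ → ℝ → ℝ)
    (hg : ContinuousOn (fun p : ℝ × ℝ => g p.1 p.2) (Set.Icc a b ×ˢ Set.Icc c d)) :
    Integrable (fun p : ℝ × ℝ => g p.1 p.2)
      ((volume.restrict (Set.Ioo a b)).prod (volume.restrict (Set.Ioo c d))) := by
  have h1 : IntegrableOn (fun p : ℝ × ℝ => g p.1 p.2)
      (Set.Icc a b ×ˢ Set.Icc c d) (volume.prod volume) :=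
    hg.integrableOn_compact (isCompact_Icc.prod isCompact_Icc)
  rw [Measure.prod_restrict]
  exact h1.mono_set (Set.prod_mono Set.Ioo_subset_Icc_self Set.Ioo_subset_Icc_self)

end prelim6

theorem sarikaya_trapezoid (a b c d M : ℝ) (hab : a < b) (hcd : c < d)
    (f f₁ f₂ : ℝ → ℝ → ℝ)
    (hc : ContinuousOn (fun p : ℝ × ℝ => f p.1 p.2) (Set.Icc a b ×ˢ Set.Icc c d))
    (hd1 : ∀ t ∈ Set.Icc a b, ∀ s ∈ Set.Icc c d, HasDerivAt (fun u => f u s) (f₁ t s) t)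
    (hd2 : ∀ t ∈ Set.Ioo a b, ∀ s ∈ Set.Ioo c d, HasDerivAt (fun v => f₁ t v) (f₂ t s) s)
    (hM : ∀ t ∈ Set.Ioo a b, ∀ s ∈ Set.Ioo c d, |f₂ t s| ≤ M) :
    |((b - a) * (d - c) / 4) * (f a c + f a d + f b c + f b d)
        - ((d - c) / 2) * (∫ t in a..b, f t c + f t d)
        - ((b - a) / 2) * (∫ s in c..d, f a s + f b s)
        + ∫ t in a..b, ∫ s in c..d, f t s| ≤
      (1 / 16) * M * (b - a) ^ 2 * (d - c) ^ 2 := by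
  have hc' : c ∈ Set.Icc c d := ⟨le_refl c, hcd.le⟩
  have hd' : d ∈ Set.Icc c d := ⟨hcd.le, le_refl d⟩
  have ha' : a ∈ Set.Icc a b := ⟨le_refl a, hab.le⟩
  have hb' : b ∈ Set.Icc a b := ⟨hab.le, le_refl b⟩
  have hMnn : 0 ≤ M := le_trans (abs_nonneg _)
    (hM ((a+b)/2) ⟨by linarith, by linarith⟩ ((c+d)/2) ⟨by linarith, by linarith⟩)
  set G : ℝ → ℝ := fun t => (d-c)/2 * (f₁ t d - f₁ t c) - ∫ s in c..d, (f₁ t s - f₁ t c)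
    with hG
  -- elementary interval integrabilities
  have int_c : IntervalIntegrable (fun t => f t c) volume a b := by
    apply ContinuousOn.intervalIntegrable
    rw [Set.uIcc_of_le hab.le]; exact cont_slice' a b c d f hc c hc'
  have int_d : IntervalIntegrable (fun t => f t d) volume a b := by
    apply ContinuousOn.intervalIntegrable
    rw [Set.uIcc_of_le hab.le]; exact cont_slice' a b c d f hc d hd'
  have int_as : IntervalIntegrable (fun s => f a s) volume c d := by
    apply ContinuousOn.intervalIntegrable
    rw [Set.uIcc_of_le hcd.le]; exact cont_slice a b c d f hc a ha'
  have int_bs : IntervalIntegrable (fun s => f b s) volume c d := by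
    apply ContinuousOn.intervalIntegrable
    rw [Set.uIcc_of_le hcd.le]; exact cont_slice a b c d f hc b hb'
  have hsplitT : (∫ t in a..b, (f t c + f t d))
      = (∫ t in a..b, f t c) + ∫ t in a..b, f t d := integral_add int_c int_d
  have hsplitS : (∫ s in c..d, (f a s + f b s))
      = (∫ s in c..d, f a s) + ∫ s in c..d, f b s := integral_add int_as int_bs
  -- product integrabilities
  have ipf : Integrable (fun p : ℝ × ℝ => f p.1 p.2)
      ((volume.restrict (Set.Ioo a b)).prod (volume.restrict (Set.Ioo c d))) :=
    int_prod_cont a b c d f hc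
  have ipF : Integrable (fun p : ℝ × ℝ => f p.1 p.2 - f p.1 c - f a p.2 + f a c)
      ((volume.restrict (Set.Ioo a b)).prod (volume.restrict (Set.Ioo c d))) :=
    int_prod_F a b c d f hab hcd hc
  have ipF1 : Integrable (fun p : ℝ × ℝ => (p.1 - (a+b)/2) * (f₁ p.1 p.2 - f₁ p.1 c))
      ((volume.restrict (Set.Ioo a b)).prod (volume.restrict (Set.Ioo c d))) :=
    int_prod_F1 a b c d M f f₁ f₂ hab hcd hc hd1 hd2 hM
  -- pointwise rewriting of the inner integral
  have innerF1 : ∀ t : ℝ, (∫ s in Set.Ioo c d, ((t - (a+b)/2) * (f₁ t s - f₁ t c)))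
      = (t - (a+b)/2) * ∫ s in c..d, (f₁ t s - f₁ t c) := by
    intro t
    rw [MeasureTheory.integral_const_mul, interval_to_Ioo c d hcd]
  have iInner' : IntervalIntegrable (fun t => (t - (a+b)/2) * ∫ s in c..d, (f₁ t s - f₁ t c))
      volume a b := by
    rw [intervalIntegrable_iff_integrableOn_Ioo_of_le hab.le]
    exact (ipF1.integral_prod_left).congr (Eventually.of_forall fun t => innerF1 t)
  have iF1d : IntervalIntegrable (fun t => (t - (a+b)/2) * (f₁ t d - f₁ t c)) volume a b :=
    int_tF1 a b c d M f f₁ f₂ hab hcd hc hd1 hd2 hM d hd'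
  -- Step A : expand the G integral
  have stepA : (∫ t in a..b, ((t - (a+b)/2) * G t))
      = (d-c)/2 * (∫ t in a..b, ((t - (a+b)/2) * (f₁ t d - f₁ t c)))
        - ∫ t in a..b, ((t - (a+b)/2) * ∫ s in c..d, (f₁ t s - f₁ t c)) := by
    have hfun : (fun t => (t - (a+b)/2) * G t)
        = fun t => (d-c)/2 * ((t - (a+b)/2) * (f₁ t d - f₁ t c))
            - (t - (a+b)/2) * ∫ s in c..d, (f₁ t s - f₁ t c) := by
      funext t; simp only [hG]; ring
    rw [hfun, intervalIntegral.integral_sub (iF1d.const_mul _) iInner',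
      intervalIntegral.integral_const_mul]
  -- Step B : FTC in t at s = d
  have stepB := ftc_t a b c d M f f₁ f₂ hab hcd hc hd1 hd2 hM d hd'
  have hBt : (∫ t in a..b, (f t d - f t c - f a d + f a c))
      = (∫ t in a..b, f t d) - (∫ t in a..b, f t c) - (b-a)*(f a d - f a c) := by
    have h1 : (fun t => f t d - f t c - f a d + f a c)
        = fun t => (f t d - f t c) - (f a d - f a c) := by funext t; ring
    rw [h1, intervalIntegral.integral_sub (int_d.sub int_c) intervalIntegrable_const,
      intervalIntegral.integral_sub int_d int_c, intervalIntegral.integral_const, smul_eq_mul]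
    try ring
  -- Step C : the double-integral term
  have int_Fb : IntervalIntegrable (fun s => f b s - f b c - f a s + f a c) volume c d :=
    ((int_bs.sub intervalIntegrable_const).sub int_as).add intervalIntegrable_const
  have int_sInner : IntervalIntegrable
      (fun s => ∫ t in a..b, (f t s - f t c - f a s + f a c)) volume c d := by
    rw [intervalIntegrable_iff_integrableOn_Ioo_of_le hcd.le]
    refine (ipF.integral_prod_right).congr (Eventually.of_forall fun s => ?_)
    dsimp only
    exact (interval_to_Ioo a b hab _).symm
  have int_A5f : IntervalIntegrable (fun t => ∫ s in c..d, f t s) volume a b := by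
    rw [intervalIntegrable_iff_integrableOn_Ioo_of_le hab.le]
    refine (ipf.integral_prod_left).congr (Eventually.of_forall fun t => ?_)
    dsimp only
    exact (interval_to_Ioo c d hcd _).symm
  have c7 : (∫ s in c..d, (f b s - f b c - f a s + f a c))
      = (∫ s in c..d, f b s) - (d-c)*(f b c) - (∫ s in c..d, f a s) + (d-c)*(f a c) := by
    have h1 : (fun s => f b s - f b c - f a s + f a c)
        = fun s => (f b s - f a s) - (f b c - f a c) := by funext s; ring
    rw [h1, intervalIntegral.integral_sub (int_bs.sub int_as) intervalIntegrable_const,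
      intervalIntegral.integral_sub int_bs int_as, intervalIntegral.integral_const, smul_eq_mul]
    try ring
  have c8 : (∫ s in c..d, (∫ t in a..b, (f t s - f t c - f a s + f a c)))
      = (∫ t in a..b, ∫ s in c..d, f t s) - (d-c) * (∫ t in a..b, f t c)
        - (b-a) * (∫ s in c..d, f a s) + (b-a)*(d-c)*(f a c) := by
    have d1 : (∫ s in c..d, (∫ t in a..b, (f t s - f t c - f a s + f a c)))
        = ∫ s in Set.Ioo c d, (∫ t in Set.Ioo a b, (f t s - f t c - f a s + f a c)) := by
      rw [interval_to_Ioo c d hcd]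
      congr 1; funext s; rw [interval_to_Ioo a b hab]
    have d2 : (∫ s in Set.Ioo c d, (∫ t in Set.Ioo a b, (f t s - f t c - f a s + f a c)))
        = ∫ t in Set.Ioo a b, (∫ s in Set.Ioo c d, (f t s - f t c - f a s + f a c)) :=
      (integral_integral_swap ipF).symm
    have d3 : (∫ t in Set.Ioo a b, (∫ s in Set.Ioo c d, (f t s - f t c - f a s + f a c)))
        = ∫ t in a..b, (∫ s in c..d, (f t s - f t c - f a s + f a c)) := by
      rw [interval_to_Ioo a b hab]
      congr 1; funext t; rw [interval_to_Ioo c d hcd]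
    have d4 : (∫ t in a..b, (∫ s in c..d, (f t s - f t c - f a s + f a c)))
        = ∫ t in a..b, ((∫ s in c..d, f t s) - (d-c)*(f t c)
            - ((∫ s in c..d, f a s) - (d-c)*(f a c))) := by
      apply intervalIntegral.integral_congr
      intro t ht
      dsimp only
      rw [Set.uIcc_of_le hab.le] at ht
      have int_ts : IntervalIntegrable (fun s => f t s) volume c d := by
        apply ContinuousOn.intervalIntegrable
        rw [Set.uIcc_of_le hcd.le]; exact cont_slice a b c d f hc t ht
      have h1 : (fun s => f t s - f t c - f a s + f a c)
          = fun s => (f t s - f a s) - (f t c - f a c) := by funext s; ring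
      rw [h1, intervalIntegral.integral_sub (int_ts.sub int_as) intervalIntegrable_const,
        intervalIntegral.integral_sub int_ts int_as, intervalIntegral.integral_const,
        smul_eq_mul]
      try ring
    have d5 : (∫ t in a..b, ((∫ s in c..d, f t s) - (d-c)*(f t c)
            - ((∫ s in c..d, f a s) - (d-c)*(f a c))))
        = (∫ t in a..b, ∫ s in c..d, f t s) - (d-c) * (∫ t in a..b, f t c)
          - (b-a) * (∫ s in c..d, f a s) + (b-a)*(d-c)*(f a c) := by
      rw [intervalIntegral.integral_sub (int_A5f.sub (int_c.const_mul (d-c)))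
        intervalIntegrable_const,
        intervalIntegral.integral_sub int_A5f (int_c.const_mul (d-c)),
        intervalIntegral.integral_const_mul, intervalIntegral.integral_const, smul_eq_mul]
      try ring
    rw [d1, d2, d3, d4, d5]
  have stepC : (∫ t in a..b, ((t - (a+b)/2) * ∫ s in c..d, (f₁ t s - f₁ t c)))
      = (b-a)/2 * ((∫ s in c..d, f b s) - (d-c)*(f b c) - (∫ s in c..d, f a s) + (d-c)*(f a c))
        - ((∫ t in a..b, ∫ s in c..d, f t s) - (d-c) * (∫ t in a..b, f t c)
            - (b-a) * (∫ s in c..d, f a s) + (b-a)*(d-c)*(f a c)) := by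
    have c1 : (∫ t in a..b, ((t - (a+b)/2) * ∫ s in c..d, (f₁ t s - f₁ t c)))
        = ∫ t in Set.Ioo a b, (∫ s in Set.Ioo c d, ((t - (a+b)/2) * (f₁ t s - f₁ t c))) := by
      rw [interval_to_Ioo a b hab]
      congr 1; funext t; rw [innerF1 t]
    have c3 : (∫ t in Set.Ioo a b, (∫ s in Set.Ioo c d, ((t - (a+b)/2) * (f₁ t s - f₁ t c))))
        = ∫ s in Set.Ioo c d, (∫ t in Set.Ioo a b, ((t - (a+b)/2) * (f₁ t s - f₁ t c))) :=
      integral_integral_swap ipF1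
    have c4 : (∫ s in Set.Ioo c d, (∫ t in Set.Ioo a b, ((t - (a+b)/2) * (f₁ t s - f₁ t c))))
        = ∫ s in Set.Ioo c d, ((b-a)/2 * (f b s - f b c - f a s + f a c)
            - ∫ t in a..b, (f t s - f t c - f a s + f a c)) := by
      apply setIntegral_congr_fun measurableSet_Ioo
      intro s hs
      dsimp only
      have hsI : s ∈ Set.Icc c d := Set.Ioo_subset_Icc_self hs
      rw [← interval_to_Ioo a b hab]
      rw [ftc_t a b c d M f f₁ f₂ hab hcd hc hd1 hd2 hM s hsI]
      ring
    have c5 : (∫ s in Set.Ioo c d, ((b-a)/2 * (f b s - f b c - f a s + f a c)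
            - ∫ t in a..b, (f t s - f t c - f a s + f a c)))
        = ∫ s in c..d, ((b-a)/2 * (f b s - f b c - f a s + f a c)
            - ∫ t in a..b, (f t s - f t c - f a s + f a c)) := by
      rw [interval_to_Ioo c d hcd]
    have c6 : (∫ s in c..d, ((b-a)/2 * (f b s - f b c - f a s + f a c)
            - ∫ t in a..b, (f t s - f t c - f a s + f a c)))
        = (b-a)/2 * (∫ s in c..d, (f b s - f b c - f a s + f a c))
          - ∫ s in c..d, (∫ t in a..b, (f t s - f t c - f a s + f a c)) := by
      rw [intervalIntegral.integral_sub (int_Fb.const_mul _) int_sInner,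
        intervalIntegral.integral_const_mul]
    rw [c1, c3, c4, c5, c6, c7, c8]
  -- the identity
  have hEeq : ((b - a) * (d - c) / 4) * (f a c + f a d + f b c + f b d)
        - ((d - c) / 2) * (∫ t in a..b, f t c + f t d)
        - ((b - a) / 2) * (∫ s in c..d, f a s + f b s)
        + (∫ t in a..b, ∫ s in c..d, f t s)
      = ∫ t in a..b, ((t - (a+b)/2) * G t) := by
    rw [hsplitT, hsplitS, stepA, stepB, hBt, stepC]
    ring
  rw [hEeq]
  -- the bound
  have hGb : ∀ t ∈ Set.Ioo a b, |G t| ≤ M * ((d-c)^2/4) := by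
    intro t ht
    have := ftc_s a b c d M f f₁ f₂ hab hcd hc hd1 hd2 hM t ht
    have hGt : G t = ∫ s in c..d, ((s - (c+d)/2) * f₂ t s) := by
      rw [hG]; exact this.symm
    rw [hGt]
    exact inner_bound a b c d M f₂ hab hcd hM t ht
  have hle : ‖∫ t in a..b, ((t - (a+b)/2) * G t)‖
      ≤ |∫ t in a..b, (M * ((d-c)^2/4) * abs (t - (a+b)/2))| := by
    apply intervalIntegral.norm_integral_le_abs_of_norm_le
    · rw [Set.uIoc_of_le hab.le]
      filter_upwards [ae_Ioo_of_Ioc a b] with t ht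
      rw [Real.norm_eq_abs, abs_mul]
      calc |t - (a+b)/2| * |G t| ≤ |t - (a+b)/2| * (M * ((d-c)^2/4)) :=
            mul_le_mul_of_nonneg_left (hGb t ht) (abs_nonneg _)
        _ = M * ((d-c)^2/4) * |t - (a+b)/2| := by ring
    · exact (continuous_const.mul (continuous_abs.comp
        (continuous_id.sub continuous_const))).intervalIntegrable a b
  have hvalue : (∫ t in a..b, (M * ((d-c)^2/4) * abs (t - (a+b)/2)))
      = M * ((d-c)^2/4) * ((b-a)^2/4) := by
    rw [intervalIntegral.integral_const_mul, abs_mid_integral a b hab.le]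
  rw [Real.norm_eq_abs, hvalue] at hle
  calc |∫ t in a..b, ((t - (a+b)/2) * G t)| ≤ |M * ((d-c)^2/4) * ((b-a)^2/4)| := hle
    _ = M * ((d-c)^2/4) * ((b-a)^2/4) := abs_of_nonneg (by positivity)
    _ = (1 / 16) * M * (b - a) ^ 2 * (d - c) ^ 2 := by ring
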